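/- Suppose d ∈ (−1,0), ω ∈ ℝ, g ≠ 0 and κ, γ > 0, and let (A, S, D) be a solution of the Maxwell–Bloch equations on [0,∞). Then for all t ≥ 0, 4|d| |A(t)|² + 4|S(t)|² + (D(t) − d)² ≤ exp( −2t · min{κ, γ} ) · ( 4|d| |A(0)|² + 4|S(0)|² + (D(0) − d)² ). -/

import Mathlib

private lemma normSq_hasDerivAt {A : ℝ → ℂ} {a : ℂ} {t : ℝ} (h : HasDerivAt A a t) :
    HasDerivAt (fun s => Complex.normSq (A s)) (2 * ((starRingEnd ℂ) (A t) * a).re) t := by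
  have hre : HasDerivAt (fun s => (A s).re) a.re t := by
    exact (Complex.reCLM.hasFDerivAt.comp_hasDerivAt t h)
  have him : HasDerivAt (fun s => (A s).im) a.im t := by
    exact (Complex.imCLM.hasFDerivAt.comp_hasDerivAt t h)
  have key := (hre.mul hre).add (him.mul him)
  have heq : (fun s => Complex.normSq (A s))
      = fun s => (A s).re * (A s).re + (A s).im * (A s).im := by
    funext s; exact Complex.normSq_apply _
  rw [heq]
  convert key using 1
  · rfl
  · rfl
  · rfl
  simp [Complex.mul_re]
  ring

/-- **Lyapunov estimate for the Maxwell–Bloch equations with `−1 < d < 0`.**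
For any solution `(A, S, D)` on `[0,∞)`,
`4|d||A(t)|² + 4|S(t)|² + (D(t) − d)²` decays at exponential rate `2·min{κ, γ}`. -/
theorem maxwell_bloch_lyapunov_estimate_neg_d
    (ω g κ γ d : ℝ) (hg : g ≠ 0) (hκ : 0 < κ) (hγ : 0 < γ)
    (hd0 : -1 < d) (hd1 : d < 0)
    (A S : ℝ → ℂ) (D : ℝ → ℝ)
    (hA : ∀ t ≥ (0 : ℝ),
      HasDerivAt A (-((κ : ℂ) + (ω : ℂ) * Complex.I) * A t + (g : ℂ) * S t) t)
    (hS : ∀ t ≥ (0 : ℝ),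
      HasDerivAt S (-((γ : ℂ) + (ω : ℂ) * Complex.I) * S t + (g : ℂ) * A t * (D t : ℂ)) t)
    (hD : ∀ t ≥ (0 : ℝ),
      HasDerivAt D (-4 * g * ((starRingEnd ℂ) (A t) * S t).re - 2 * γ * (D t - d)) t) :
    ∀ t ≥ (0 : ℝ),
      4 * |d| * ‖A t‖ ^ 2 + 4 * ‖S t‖ ^ 2 + (D t - d) ^ 2 ≤
        Real.exp (-2 * t * min κ γ) *
          (4 * |d| * ‖A 0‖ ^ 2 + 4 * ‖S 0‖ ^ 2 + (D 0 - d) ^ 2) := by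
  set m := min κ γ with hm
  have hmκ : m ≤ κ := min_le_left _ _
  have hmγ : m ≤ γ := min_le_right _ _
  set V : ℝ → ℝ := fun t =>
    4 * |d| * Complex.normSq (A t) + 4 * Complex.normSq (S t) + (D t - d) ^ 2 with hV
  set f : ℝ → ℝ := fun t => Real.exp (2 * m * t) * V t with hf
  -- derivative of f at each t ≥ 0
  have hfder : ∀ t ∈ Set.Ici (0 : ℝ), HasDerivAt f
      (Real.exp (2 * m * t) * (2 * m) * V t +
        Real.exp (2 * m * t) *
          (4 * |d| * (2 * ((starRingEnd ℂ) (A t) *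
              (-((κ : ℂ) + (ω : ℂ) * Complex.I) * A t + (g : ℂ) * S t)).re) +
           4 * (2 * ((starRingEnd ℂ) (S t) *
              (-((γ : ℂ) + (ω : ℂ) * Complex.I) * S t + (g : ℂ) * A t * (D t : ℂ))).re) +
           (2 : ℕ) * (D t - d) ^ 1 *
              (-4 * g * ((starRingEnd ℂ) (A t) * S t).re - 2 * γ * (D t - d)))) t := by
    intro t ht
    have h1 := normSq_hasDerivAt (hA t ht)
    have h2 := normSq_hasDerivAt (hS t ht)
    have h3 := ((hD t ht).sub_const d).pow 2
    have hVd : HasDerivAt V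
        (4 * |d| * (2 * ((starRingEnd ℂ) (A t) *
            (-((κ : ℂ) + (ω : ℂ) * Complex.I) * A t + (g : ℂ) * S t)).re) +
         4 * (2 * ((starRingEnd ℂ) (S t) *
            (-((γ : ℂ) + (ω : ℂ) * Complex.I) * S t + (g : ℂ) * A t * (D t : ℂ))).re) +
         (2 : ℕ) * (D t - d) ^ 1 *
            (-4 * g * ((starRingEnd ℂ) (A t) * S t).re - 2 * γ * (D t - d))) t :=
      ((h1.const_mul (4 * |d|)).add (h2.const_mul 4)).add h3
    have hexp : HasDerivAt (fun s => Real.exp (2 * m * s))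
        (Real.exp (2 * m * t) * (2 * m)) t := by
      simpa using (((hasDerivAt_id t).const_mul (2 * m)).exp)
    simpa [hf, mul_comm, Pi.mul_def] using hexp.mul hVd
  -- the derivative is nonpositive
  have hder_nonpos : ∀ t ∈ Set.Ici (0 : ℝ), deriv f t ≤ 0 := by
    intro t ht
    rw [(hfder t ht).deriv]
    have hR1 : ((starRingEnd ℂ) (A t) *
        (-((κ : ℂ) + (ω : ℂ) * Complex.I) * A t + (g : ℂ) * S t)).re
        = -κ * Complex.normSq (A t) + g * ((starRingEnd ℂ) (A t) * S t).re := by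
      simp [Complex.mul_re, Complex.mul_im, Complex.normSq_apply]
      ring
    have hR2 : ((starRingEnd ℂ) (S t) *
        (-((γ : ℂ) + (ω : ℂ) * Complex.I) * S t + (g : ℂ) * A t * (D t : ℂ))).re
        = -γ * Complex.normSq (S t) + g * D t * ((starRingEnd ℂ) (A t) * S t).re := by
      simp [Complex.mul_re, Complex.mul_im, Complex.normSq_apply]
      ring
    rw [hR1, hR2]
    have habs : |d| = -d := abs_of_neg hd1
    have hx : (0 : ℝ) ≤ Complex.normSq (A t) := Complex.normSq_nonneg _
    have hy : (0 : ℝ) ≤ Complex.normSq (S t) := Complex.normSq_nonneg _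
    have he : (0 : ℝ) ≤ (D t - d) ^ 2 := sq_nonneg _
    have hexp_pos : (0 : ℝ) < Real.exp (2 * m * t) := Real.exp_pos _
    have hkey : 2 * m * V t +
        (4 * |d| * (2 * (-κ * Complex.normSq (A t) + g * ((starRingEnd ℂ) (A t) * S t).re)) +
         4 * (2 * (-γ * Complex.normSq (S t) + g * D t * ((starRingEnd ℂ) (A t) * S t).re)) +
         (2 : ℕ) * (D t - d) ^ 1 *
            (-4 * g * ((starRingEnd ℂ) (A t) * S t).re - 2 * γ * (D t - d))) ≤ 0 := by
      simp only [hV, habs]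
      push_cast
      nlinarith [mul_nonneg (mul_nonneg (neg_nonneg.2 hd1.le) (sub_nonneg.2 hmκ)) hx,
        mul_nonneg (sub_nonneg.2 hmγ) hy, mul_nonneg (sub_nonneg.2 hmγ) he,
        mul_nonneg hγ.le he]
    calc Real.exp (2 * m * t) * (2 * m) * V t +
          Real.exp (2 * m * t) *
          (4 * |d| * (2 * (-κ * Complex.normSq (A t) + g * ((starRingEnd ℂ) (A t) * S t).re)) +
           4 * (2 * (-γ * Complex.normSq (S t) + g * D t * ((starRingEnd ℂ) (A t) * S t).re)) +
           (2 : ℕ) * (D t - d) ^ 1 *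
              (-4 * g * ((starRingEnd ℂ) (A t) * S t).re - 2 * γ * (D t - d)))
        = Real.exp (2 * m * t) * (2 * m * V t +
          (4 * |d| * (2 * (-κ * Complex.normSq (A t) + g * ((starRingEnd ℂ) (A t) * S t).re)) +
           4 * (2 * (-γ * Complex.normSq (S t) + g * D t * ((starRingEnd ℂ) (A t) * S t).re)) +
           (2 : ℕ) * (D t - d) ^ 1 *
              (-4 * g * ((starRingEnd ℂ) (A t) * S t).re - 2 * γ * (D t - d)))) := by ring
      _ ≤ Real.exp (2 * m * t) * 0 := by
          exact mul_le_mul_of_nonneg_left hkey hexp_pos.le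
      _ = 0 := by ring
  -- f is antitone on [0,∞)
  have hcont : ContinuousOn f (Set.Ici 0) := fun t ht =>
    ((hfder t ht).continuousAt).continuousWithinAt
  have hanti : AntitoneOn f (Set.Ici 0) := by
    apply antitoneOn_of_deriv_nonpos (convex_Ici 0) hcont
    · intro t ht
      exact ((hfder t (interior_subset ht)).differentiableAt).differentiableWithinAt
    · intro t ht
      exact hder_nonpos t (interior_subset ht)
  intro t ht
  have hle : f t ≤ f 0 := hanti (Set.self_mem_Ici) ht ht
  have h0 : f 0 = V 0 := by simp [hf]
  have hft : Real.exp (2 * m * t) * V t ≤ V 0 := by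
    rw [← h0]; exact hle
  have hVt : V t ≤ Real.exp (-2 * t * m) * V 0 := by
    have := mul_le_mul_of_nonneg_left hft (Real.exp_pos (-2 * t * m)).le
    calc V t = Real.exp (-2 * t * m) * (Real.exp (2 * m * t) * V t) := by
          rw [← mul_assoc, ← Real.exp_add]
          ring_nf
          simp
      _ ≤ Real.exp (-2 * t * m) * V 0 := this
  have habsA : ‖A t‖ ^ 2 = Complex.normSq (A t) := Complex.sq_norm _
  have habsS : ‖S t‖ ^ 2 = Complex.normSq (S t) := Complex.sq_norm _
  have habsA0 : ‖A 0‖ ^ 2 = Complex.normSq (A 0) := Complex.sq_norm _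
  have habsS0 : ‖S 0‖ ^ 2 = Complex.normSq (S 0) := Complex.sq_norm _
  rw [habsA, habsS, habsA0, habsS0]
  exact hVt
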